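/- If τ is a finite sequence of distinct natural numbers with aix τ = 0, then for any natural number k not occurring in τ, aix f(k,τ) = 1 and des f(k,τ) = des τ. -/

import Mathlib

namespace PaperStats

/-- `des w` is the number of descents of the word `w` (0-indexed positions `i`
with `w(i) > w(i+1)`). -/
def des (w : List ℕ) : ℕ :=
  ((Finset.range (w.length - 1)).filter fun i => w.getD (i + 1) 0 < w.getD i 0).card

/-- `inv w` is the number of inversions of the word `w`: pairs of positions
`i < j` with `w(i) > w(j)`. -/
def inv (w : List ℕ) : ℕ :=
  ((Finset.range w.length ×ˢ Finset.range w.length).filter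
    fun p => p.1 < p.2 ∧ w.getD p.2 0 < w.getD p.1 0).card

/-- An inversion `(i,j)` of `w` is admissible if either `w(j) < w(j+1)`
(`j` is not the last position and is followed by an ascent), or there is a
position `k` strictly between `i` and `j` with `w(j) > w(k)`. -/
def IsAdmissible (w : List ℕ) (i j : ℕ) : Prop :=
  (j + 1 < w.length ∧ w.getD j 0 < w.getD (j + 1) 0) ∨
    ∃ k, i < k ∧ k < j ∧ w.getD k 0 < w.getD j 0

instance (w : List ℕ) (i j : ℕ) : Decidable (IsAdmissible w i j) :=
  decidable_of_iff ((j + 1 < w.length ∧ w.getD j 0 < w.getD (j + 1) 0) ∨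
      ∃ k ∈ Finset.Ioo i j, w.getD k 0 < w.getD j 0) (by
    unfold IsAdmissible
    simp only [Finset.mem_Ioo, and_assoc])

/-- `ai w` is the number of admissible inversions of `w`. -/
def ai (w : List ℕ) : ℕ :=
  ((Finset.range w.length ×ˢ Finset.range w.length).filter
    fun p => p.1 < p.2 ∧ w.getD p.2 0 < w.getD p.1 0 ∧ IsAdmissible w p.1 p.2).card

/-- `aid w = ai w + des w`. -/
def aid (w : List ℕ) : ℕ := ai w + des w

/-- The statistic `aix`, defined recursively: `aix ∅ = 0`; writing a nonempty
word as `π = α m β`, where `m` is the smallest letter and `α` is the maximal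
prefix not containing `m`, one has `aix π = 1 + aix β` if `α = ∅`,
`aix π = 0` if `β = ∅` (and `α ≠ ∅`), and `aix π = aix α` otherwise. -/
def aix : List ℕ → ℕ
  | [] => 0
  | x :: xs =>
    if (x :: xs).takeWhile (fun a => decide (a ≠ xs.foldr min x)) = [] then
      1 + aix (((x :: xs).dropWhile (fun a => decide (a ≠ xs.foldr min x))).tail)
    else if ((x :: xs).dropWhile (fun a => decide (a ≠ xs.foldr min x))).tail = [] then 0
    else aix ((x :: xs).takeWhile (fun a => decide (a ≠ xs.foldr min x)))
termination_by w => w.length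
decreasing_by
  all_goals simp only [List.foldr_attach] at *
  · have h1 := (List.dropWhile_sublist (l := x :: xs) (fun a => decide (a ≠ xs.foldr min x))).length_le
    have h2 := List.length_tail (l := (x :: xs).dropWhile (fun a => decide (a ≠ xs.foldr min x)))
    simp only [List.length_cons] at *
    omega
  · rename_i hα hβ
    have h0 : ((x :: xs).takeWhile (fun a => decide (a ≠ xs.foldr min x))) ++
        ((x :: xs).dropWhile (fun a => decide (a ≠ xs.foldr min x))) = x :: xs :=
      List.takeWhile_append_dropWhile ..
    have h1 : ((x :: xs).dropWhile (fun a => decide (a ≠ xs.foldr min x))) ≠ [] := by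
      intro h
      apply hβ
      rw [h]
      rfl
    have h2 := congrArg List.length h0
    simp only [List.length_append, List.length_cons] at h2
    have h3 : 0 < ((x :: xs).dropWhile (fun a => decide (a ≠ xs.foldr min x))).length :=
      List.length_pos_iff.mpr h1
    simp only [List.length_cons]
    omega

/-- The map `f(k,τ)`: with `m` the smallest letter of `τ` together with `k`
(`k` not occurring in `τ`), and `τ = α m β` with `α` the maximal prefix of `τ`
avoiding `m`: `f(k,∅) = k`; `f(k,τ) = kτ` if `k = m`; and for `k > m`,
`f(k,τ) = f(k,β) m` if `α = ∅`, `f(k,τ) = k m α` if `β = ∅`, and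
`f(k,τ) = f(k,α) m β` otherwise. -/
def fkt (k : ℕ) : List ℕ → List ℕ
  | [] => [k]
  | x :: xs =>
    if k < xs.foldr min x then k :: x :: xs
    else if (x :: xs).takeWhile (fun a => decide (a ≠ xs.foldr min x)) = [] then
      fkt k (((x :: xs).dropWhile (fun a => decide (a ≠ xs.foldr min x))).tail) ++
        [xs.foldr min x]
    else if ((x :: xs).dropWhile (fun a => decide (a ≠ xs.foldr min x))).tail = [] then
      k :: xs.foldr min x :: ((x :: xs).takeWhile (fun a => decide (a ≠ xs.foldr min x)))
    else
      fkt k ((x :: xs).takeWhile (fun a => decide (a ≠ xs.foldr min x))) ++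
        xs.foldr min x :: ((x :: xs).dropWhile (fun a => decide (a ≠ xs.foldr min x))).tail
termination_by w => w.length
decreasing_by
  all_goals simp only [List.foldr_attach] at *
  · have h1 := (List.dropWhile_sublist (l := x :: xs) (fun a => decide (a ≠ xs.foldr min x))).length_le
    have h2 := List.length_tail (l := (x :: xs).dropWhile (fun a => decide (a ≠ xs.foldr min x)))
    simp only [List.length_cons] at *
    omega
  · rename_i hk hα hβ
    have h0 : ((x :: xs).takeWhile (fun a => decide (a ≠ xs.foldr min x))) ++
        ((x :: xs).dropWhile (fun a => decide (a ≠ xs.foldr min x))) = x :: xs :=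
      List.takeWhile_append_dropWhile ..
    have h1 : ((x :: xs).dropWhile (fun a => decide (a ≠ xs.foldr min x))) ≠ [] := by
      intro h
      apply hβ
      rw [h]
      rfl
    have h2 := congrArg List.length h0
    simp only [List.length_append, List.length_cons] at h2
    have h3 : 0 < ((x :: xs).dropWhile (fun a => decide (a ≠ xs.foldr min x))).length :=
      List.length_pos_iff.mpr h1
    simp only [List.length_cons]
    omega

/-- `ini w` is the first letter of `w`. -/
def ini (w : List ℕ) : ℕ := w.headD 0

/-- The word of a permutation `π ∈ S_n`, namely `π(1) π(2) … π(n)`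
(with values in `{1, …, n}`). -/
def permList {n : ℕ} (π : Equiv.Perm (Fin n)) : List ℕ :=
  List.ofFn fun i => (π i : ℕ) + 1

/-- The bijection `φ`: `φ(π) = f(π(1), f(π(2), ⋯ f(π(n), ∅) ⋯ ))`. -/
def phiW (w : List ℕ) : List ℕ := w.foldr fkt []

/-- Helper: `decRun l` splits `l` into its maximal weakly decreasing prefix
and the rest. -/
def decRun : List ℕ → List ℕ × List ℕ
  | [] => ([], [])
  | [x] => ([x], [])
  | x :: y :: rest =>
    if y ≤ x then ((x :: (decRun (y :: rest)).1), (decRun (y :: rest)).2)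
    else ([x], y :: rest)

theorem decRun_append : ∀ l : List ℕ, (decRun l).1 ++ (decRun l).2 = l
  | [] => rfl
  | [x] => rfl
  | x :: y :: rest => by
    rw [decRun]
    split
    · simpa using decRun_append (y :: rest)
    · rfl

/-- Helper computing the hook factorization of a word from its reversal: the
rightmost hook of the word starts at its rightmost descent top, i.e. it is
obtained by extending the maximal weakly decreasing prefix of the reversed word
by one more letter; the process is repeated on what remains, and when no
letters usable for a hook remain the word left over is the increasing part
`π₀`. The result is `(π₀, [π₁, …, π_k])`. -/
def hookRev (r : List ℕ) : List ℕ × List (List ℕ) :=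
  match h : (decRun r).2 with
  | [] => (r.reverse, [])
  | z :: rest =>
    ((hookRev rest).1, (hookRev rest).2 ++ [z :: (decRun r).1.reverse])
termination_by r.length
decreasing_by
  have h2 := congrArg List.length (decRun_append r)
  rw [h] at h2
  simp only [List.length_append, List.length_cons] at h2
  omega

/-- The hook factorization `(π₀, [π₁, …, π_k])` of a word
`w = π₀ π₁ ⋯ π_k`, where `π₀` is increasing and each `π_i`, `i ≥ 1`, is a
hook. -/
def hookSplit (w : List ℕ) : List ℕ × List (List ℕ) := hookRev w.reverse

/-- `pix w` is the length of the initial increasing factor `π₀` in the hook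
factorization of `w`. -/
def pix (w : List ℕ) : ℕ := (hookSplit w).1.length

/-- `lec w` is the sum of the numbers of inversions of the hooks in the hook
factorization of `w`. -/
def lec (w : List ℕ) : ℕ := ((hookSplit w).2.map inv).sum

/-- A word `w(1) … w(r)` with `r ≥ 2` is a hook if
`w(1) > w(2) ≤ w(3) ≤ ⋯ ≤ w(r)`. -/
def IsHook (w : List ℕ) : Prop :=
  ∃ a b rest, w = a :: b :: rest ∧ b < a ∧ List.Chain' (· ≤ ·) (b :: rest)

/-- `w(i)` is a left-to-right maximum of `w` if `w(k) < w(i)` for all `k < i`. -/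
def IsLRMax (w : List ℕ) (i : ℕ) : Prop := ∀ k < i, w.getD k 0 < w.getD i 0

instance (w : List ℕ) (i : ℕ) : Decidable (IsLRMax w i) := by
  unfold IsLRMax; infer_instance

/-- `mix w` counts the pairs of positions `i < j` such that either
`w(i) > w(j)` and `w(i)` is a left-to-right maximum, or `w(i) < w(j)` and
there is `k < i` with `w(k) > w(j)`. -/
def mix (w : List ℕ) : ℕ :=
  ((Finset.range w.length ×ˢ Finset.range w.length).filter fun p =>
    p.1 < p.2 ∧ ((w.getD p.2 0 < w.getD p.1 0 ∧ IsLRMax w p.1) ∨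
      (w.getD p.1 0 < w.getD p.2 0 ∧ ∃ k ∈ Finset.range p.1, w.getD p.2 0 < w.getD k 0))).card

/-- `das w` counts the positions `i` such that either `w(i) > w(i+1)` and
`w(i)` is a left-to-right maximum, or `w(i) < w(i+1)` and there is `k < i`
with `w(k) > w(i+1)`. -/
def das (w : List ℕ) : ℕ :=
  ((Finset.range (w.length - 1)).filter fun i =>
    (w.getD (i + 1) 0 < w.getD i 0 ∧ IsLRMax w i) ∨
      (w.getD i 0 < w.getD (i + 1) 0 ∧ ∃ k ∈ Finset.range i, w.getD (i + 1) 0 < w.getD k 0)).card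

/-- The values of the left-to-right maxima of a word, listed in increasing
order (which is also their order of occurrence). -/
def lrMaxima : List ℕ → List ℕ
  | [] => []
  | x :: xs => x :: lrMaxima (xs.filter fun a => decide (x < a))
termination_by l => l.length
decreasing_by
  have := xs.length_filter_le (fun a => decide (x < a))
  simp only [List.length_cons]
  rw [List.length_unattach]
  exact Nat.lt_succ_of_le ((List.length_filter_le _ _).trans List.length_attach.le)

/-- `Bset w m` is the list of entries of `w` that are smaller than `m` and lie
to the right of (the first occurrence of) `m` in `w`. -/
def Bset (w : List ℕ) (m : ℕ) : List ℕ :=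
  ((w.dropWhile fun a => decide (a ≠ m)).tail).filter fun a => decide (a < m)

/-- Helper for `psiS`: replace the letters satisfying `P`, in order, by the
letters of the first list. -/
def replaceSub (P : ℕ → Bool) : List ℕ → List ℕ → List ℕ
  | _, [] => []
  | rs, x :: xs =>
    if P x then rs.headD x :: replaceSub P rs.tail xs else x :: replaceSub P rs xs

/-- `psiS S w` is `ψ_S(w)`: the result of reversing, in place, the subword of
`w` consisting of the entries belonging to `S`. -/
def psiS (S : List ℕ) (w : List ℕ) : List ℕ :=
  replaceSub (fun a => decide (a ∈ S)) ((w.filter fun a => decide (a ∈ S)).reverse) w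

/-- Helper applying the alternating composition
`ψ_{B₁} ∘ ψ_{B₂ ∩ B₁} ∘ ψ_{B₂} ∘ ⋯ ∘ ψ_{B_{k-1}} ∘ ψ_{B_k ∩ B_{k-1}} ∘ ψ_{B_k}`
to `w`, given the list `[B_k, B_{k-1}, …, B₁]`. -/
def psiChain : List (List ℕ) → List ℕ → List ℕ
  | [], w => w
  | [B], w => psiS B w
  | B :: B' :: rest, w => psiChain (B' :: rest) (psiS (B.inter B') (psiS B w))

/-- The Brändén–Claesson bijection `ψ`. -/
def psi (w : List ℕ) : List ℕ :=
  psiChain (((lrMaxima w).map (Bset w)).reverse) w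

/-! ### Auxiliary lemmas -/

lemma foldr_min_mem (x : ℕ) (xs : List ℕ) : xs.foldr min x ∈ x :: xs := by
  induction xs with
  | nil => simp
  | cons y ys ih =>
    simp only [List.foldr_cons]
    rcases le_total y (ys.foldr min x) with h | h
    · rw [min_eq_left h]; simp
    · rw [min_eq_right h]
      rcases List.mem_cons.mp ih with h2 | h2
      · rw [h2]; simp
      · simp [h2]
      
lemma foldr_min_le (x : ℕ) (xs : List ℕ) : ∀ a ∈ x :: xs, xs.foldr min x ≤ a := by
  induction xs with
  | nil => simp
  | cons y ys ih =>
    intro a ha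
    simp only [List.mem_cons] at ha
    simp only [List.foldr_cons]
    rcases ha with h | h | h
    · subst h; exact le_trans (min_le_right _ _) (ih a (by simp))
    · subst h; exact min_le_left _ _
    · exact le_trans (min_le_right _ _) (ih a (by simp [h]))

lemma foldr_min_eq (x m : ℕ) (xs : List ℕ) (h1 : m ∈ x :: xs)
    (h2 : ∀ a ∈ x :: xs, m ≤ a) : xs.foldr min x = m :=
  le_antisymm (foldr_min_le x xs m h1) (h2 _ (foldr_min_mem x xs))

lemma takeWhile_middle (p : ℕ → Bool) (u v : List ℕ) (m : ℕ)
    (hu : ∀ a ∈ u, p a = true) (hm : p m = false) :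
    (u ++ m :: v).takeWhile p = u ∧ (u ++ m :: v).dropWhile p = m :: v := by
  induction u with
  | nil => simp [List.takeWhile, List.dropWhile, hm]
  | cons a u ih =>
    have ha : p a = true := hu a (by simp)
    have := ih (fun b hb => hu b (by simp [hb]))
    simp [List.takeWhile, List.dropWhile, ha, this.1, this.2]

lemma middle_parts (u v : List ℕ) (m : ℕ) (hm : ∀ a ∈ u ++ v, m < a) :
    ∃ x xs, u ++ m :: v = x :: xs ∧ xs.foldr min x = m ∧
      (x :: xs).takeWhile (fun a => decide (a ≠ m)) = u ∧
      (x :: xs).dropWhile (fun a => decide (a ≠ m)) = m :: v := by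
  have hmem : m ∈ u ++ m :: v := by simp
  have hle : ∀ a ∈ u ++ m :: v, m ≤ a := by
    intro a ha
    simp only [List.mem_append, List.mem_cons] at ha
    rcases ha with h | rfl | h
    · exact le_of_lt (hm a (by simp [h]))
    · exact le_rfl
    · exact le_of_lt (hm a (by simp [h]))
  have hu : ∀ a ∈ u, (fun a => decide (a ≠ m)) a = true := by
    intro a ha
    simp only [decide_eq_true_eq]
    exact (hm a (by simp [ha])).ne'
  have hmf : (fun a => decide (a ≠ m)) m = false := by simp
  have htd := takeWhile_middle _ u v m hu hmf
  cases u with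
  | nil =>
    refine ⟨m, v, rfl, ?_, ?_, ?_⟩
    · exact foldr_min_eq m m v (by simp) (by simpa using hle)
    · simpa using htd.1
    · simpa using htd.2
  | cons a u =>
    refine ⟨a, u ++ m :: v, rfl, ?_, ?_, ?_⟩
    · exact foldr_min_eq a m _ (by simpa using hmem) (by simpa using hle)
    · simpa using htd.1
    · simpa using htd.2

lemma aix_eq (m : ℕ) (u v : List ℕ) (hm : ∀ a ∈ u ++ v, m < a) :
    aix (u ++ m :: v) = if u = [] then 1 + aix v else if v = [] then 0 else aix u := by
  obtain ⟨x, xs, heq, hmin, ht, hd⟩ := middle_parts u v m hm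
  rw [heq, aix, hmin, ht, hd]
  rfl

lemma fkt_eq (k m : ℕ) (u v : List ℕ) (hm : ∀ a ∈ u ++ v, m < a) :
    fkt k (u ++ m :: v) = if k < m then k :: (u ++ m :: v)
      else if u = [] then fkt k v ++ [m]
      else if v = [] then k :: m :: u
      else fkt k u ++ m :: v := by
  obtain ⟨x, xs, heq, hmin, ht, hd⟩ := middle_parts u v m hm
  rw [heq, fkt, hmin, ht, hd]
  rfl

lemma min_split (x : ℕ) (xs : List ℕ) (hnd : (x :: xs).Nodup) :
    ∃ u v, x :: xs = u ++ (xs.foldr min x) :: v ∧ ∀ a ∈ u ++ v, xs.foldr min x < a := by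
  set m := xs.foldr min x with hm
  obtain ⟨u, v, huv⟩ := List.append_of_mem (foldr_min_mem x xs)
  refine ⟨u, v, huv, ?_⟩
  intro a ha
  have hmem : a ∈ x :: xs := by
    rw [huv]; simp only [List.mem_append, List.mem_cons] at ha ⊢; tauto
  have hle := foldr_min_le x xs a hmem
  rcases lt_or_eq_of_le hle with h | h
  · exact h
  · exfalso
    rw [huv] at hnd
    rw [List.nodup_append] at hnd
    subst h
    simp only [List.mem_append] at ha
    rcases ha with h | h
    · exact hnd.2.2 _ h _ (by simp) rfl
    · exact (List.nodup_cons.mp hnd.2.1).1 h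

lemma fkt_perm (k : ℕ) : ∀ n (τ : List ℕ), τ.length ≤ n → τ.Nodup →
    (fkt k τ).Perm (k :: τ) := by
  intro n
  induction n with
  | zero =>
    intro τ hlen _
    have : τ = [] := List.length_eq_zero_iff.mp (Nat.le_zero.mp hlen)
    subst this
    rw [fkt]
  | succ n ih =>
    intro τ hlen hnd
    cases τ with
    | nil => rw [fkt]
    | cons x xs =>
      obtain ⟨u, v, heq, hm⟩ := min_split x xs hnd
      set m := xs.foldr min x with hmdef
      have hlen' : u.length + v.length ≤ n := by
        have h1 := congrArg List.length heq
        simp only [List.length_cons, List.length_append] at h1 hlen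
        omega
      have hndu : u.Nodup ∧ v.Nodup := by
        rw [heq, List.nodup_append] at hnd
        exact ⟨hnd.1, (List.nodup_cons.mp hnd.2.1).2⟩
      rw [heq, fkt_eq k m u v hm]
      split_ifs with h1 h2 h3
      · exact List.Perm.refl _
      · subst h2
        have hp : (fkt k v).Perm (k :: v) := ih v (by omega) hndu.2
        refine (hp.append_right [m]).trans ?_
        simp only [List.nil_append, List.cons_append]
        exact ((List.perm_append_singleton m v).cons k)
      · subst h3
        exact ((List.perm_append_singleton m u).symm.cons k)
      · have hp : (fkt k u).Perm (k :: u) := ih u (by omega) hndu.1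
        exact (hp.append_right (m :: v))

lemma des_nil : des [] = 0 := rfl

lemma des_single (a : ℕ) : des [a] = 0 := rfl

lemma des_cons_cons (a b : ℕ) (l : List ℕ) :
    des (a :: b :: l) = (if b < a then 1 else 0) + des (b :: l) := by
  unfold des
  simp only [List.length_cons, Nat.add_sub_cancel]
  rw [Finset.card_filter, Finset.card_filter, Finset.sum_range_succ']
  simp only [List.getD_cons_succ, List.getD_cons_zero]
  omega

lemma des_cons_of_lt (k x : ℕ) (l : List ℕ) (h : k < x) :
    des (k :: x :: l) = des (x :: l) := by
  rw [des_cons_cons]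
  simp [Nat.not_lt_of_lt h, Nat.lt_asymm h]

lemma des_append_cons (m : ℕ) (v : List ℕ) : ∀ (u : List ℕ), u ≠ [] →
    des (u ++ m :: v) = des (u ++ [m]) + des (m :: v)
  | [], h => absurd rfl h
  | [a], _ => by
    simp only [List.cons_append, List.nil_append]
    rw [des_cons_cons, des_cons_cons, des_single]
    omega
  | a :: b :: u, _ => by
    have ih := des_append_cons m v (b :: u) (by simp)
    simp only [List.cons_append] at ih ⊢
    rw [des_cons_cons, des_cons_cons (a := a) (b := b) (l := u ++ [m]), ih]
    omega

lemma des_append_last (m : ℕ) : ∀ (u : List ℕ), u ≠ [] → (∀ a ∈ u, m < a) →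
    des (u ++ [m]) = des u + 1
  | [], h, _ => absurd rfl h
  | [a], _, hm => by
    simp only [List.cons_append, List.nil_append]
    rw [des_cons_cons, des_single, des_single]
    simp [hm a (by simp)]
  | a :: b :: u, _, hm => by
    have ih := des_append_last m (b :: u) (by simp) (fun x hx => hm x (by simp [List.mem_cons] at hx ⊢; tauto))
    simp only [List.cons_append] at ih ⊢
    rw [des_cons_cons, des_cons_cons (a := a) (b := b) (l := u), ih]
    omega

lemma des_append_min (m : ℕ) (u v : List ℕ) (hu : u ≠ []) (hm : ∀ a ∈ u, m < a) :
    des (u ++ m :: v) = des u + 1 + des (m :: v) := by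
  rw [des_append_cons m v u hu, des_append_last m u hu hm]

lemma aix_single (k : ℕ) : aix [k] = 1 := by
  have := aix_eq k [] [] (by simp)
  simpa [aix] using this

lemma main_aux : ∀ n (τ : List ℕ), τ.length ≤ n → ∀ k, τ.Nodup → k ∉ τ → aix τ = 0 →
    aix (fkt k τ) = 1 ∧ des (fkt k τ) = des τ := by
  intro n
  induction n with
  | zero =>
    intro τ hlen k _ _ _
    have hτ : τ = [] := List.length_eq_zero_iff.mp (Nat.le_zero.mp hlen)
    subst hτ
    rw [fkt]
    exact ⟨aix_single k, rfl⟩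
  | succ n ih =>
    intro τ hlen k hnd hk h0
    cases τ with
    | nil =>
      rw [fkt]
      exact ⟨aix_single k, rfl⟩
    | cons x xs =>
      obtain ⟨u, v, heq, hm⟩ := min_split x xs hnd
      set m := xs.foldr min x with hmdef
      have hlen' : u.length + v.length ≤ n := by
        have h1 := congrArg List.length heq
        simp only [List.length_cons, List.length_append] at h1 hlen
        omega
      have hndu : u.Nodup ∧ v.Nodup := by
        rw [heq, List.nodup_append] at hnd
        exact ⟨hnd.1, (List.nodup_cons.mp hnd.2.1).2⟩
      rw [heq] at h0 hk
      have haix := aix_eq m u v hm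
      have hkm : k ≠ m := by
        intro h
        exact hk (by simp [h])
      rw [heq, fkt_eq k m u v hm]
      by_cases hkm' : k < m
      · rw [if_pos hkm']
        have hka : ∀ a ∈ ([] : List ℕ) ++ (u ++ m :: v), k < a := by
          intro a ha
          simp only [List.nil_append, List.mem_append, List.mem_cons] at ha
          rcases ha with h | rfl | h
          · exact lt_trans hkm' (hm a (by simp [h]))
          · exact hkm'
          · exact lt_trans hkm' (hm a (by simp [h]))
        constructor
        · have h2 := aix_eq k [] (u ++ m :: v) (by simpa using hka)
          simp only [List.nil_append] at h2
          rw [h2]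
          simp [h0]
        · cases u with
          | nil =>
            simp only [List.nil_append]
            exact des_cons_of_lt k m v hkm'
          | cons c u' =>
            simp only [List.cons_append]
            exact des_cons_of_lt k c _ (hka c (by simp))
      · have hmk : m < k := lt_of_le_of_ne (not_lt.mp hkm') (Ne.symm hkm)
        rw [if_neg hkm']
        by_cases hu : u = []
        · exfalso
          rw [haix, if_pos hu] at h0
          omega
        · rw [if_neg hu]
          have hmu : ∀ a ∈ u, m < a := fun a ha => hm a (by simp [ha])
          by_cases hv : v = []
          · subst hv
            rw [if_pos rfl]
            constructor
            · have h2 := aix_eq m [k] u (by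
                intro a ha
                simp only [List.cons_append, List.nil_append, List.mem_cons] at ha
                rcases ha with rfl | h
                · exact hmk
                · exact hmu a h)
              simp only [List.cons_append, List.nil_append] at h2
              rw [h2, if_neg (by simp), if_neg hu]
              exact aix_single k
            · rw [des_cons_cons, if_pos hmk, des_append_last m u hu hmu]
              cases u with
              | nil => exact absurd rfl hu
              | cons c u' =>
                rw [des_cons_of_lt m c u' (hmu c (by simp))]
                omega
          · rw [if_neg hv]
            have haixu : aix u = 0 := by
              rw [haix, if_neg hu, if_neg hv] at h0
              exact h0
            have hku : k ∉ u := fun h => hk (by simp [h])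
            obtain ⟨ih1, ih2⟩ := ih u (by omega) k hndu.1 hku haixu
            have hperm := fkt_perm k u.length u le_rfl hndu.1
            have hfne : fkt k u ≠ [] := by
              intro h
              have h2 := hperm.length_eq
              rw [h] at h2
              simp at h2
            have hfm : ∀ a ∈ fkt k u, m < a := by
              intro a ha
              rcases List.mem_cons.mp (hperm.mem_iff.mp ha) with h | h
              · subst h; exact hmk
              · exact hmu a h
            constructor
            · rw [aix_eq m (fkt k u) v (by
                intro a ha
                rcases List.mem_append.mp ha with h | h
                · exact hfm a h
                · exact hm a (by simp [h])),
                if_neg hfne, if_neg hv]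
              exact ih1
            · rw [des_append_min m (fkt k u) v hfne hfm, des_append_min m u v hu hmu, ih2]

/-- If `aix τ = 0`, then `aix f(k,τ) = 1` and
`des f(k,τ) = des τ`. -/
theorem aix_fkt_of_aix_eq_zero (k : ℕ) (τ : List ℕ) (hτ : τ.Nodup) (hk : k ∉ τ)
    (h0 : aix τ = 0) :
    aix (fkt k τ) = 1 ∧ des (fkt k τ) = des τ := by
  exact main_aux τ.length τ le_rfl k hτ hk h0

end PaperStats
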